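/- Let f : ℝᴺ × ℝ → ℝ be continuous with F(x,t) = ∫₀ᵗ f(x,s) ds, and assume that for each x the map t ↦ f(x,t)/|t| is non-decreasing on (−∞,0) and on (0,∞). Then for every θ ∈ [0,1] and all (x,t) ∈ ℝᴺ × ℝ: ((1 − θ²)/2)·t·f(x,t) ≥ F(x,t) − F(x,θt). In particular f satisfies condition (Ta). -/

import Mathlib

open Filter Topology

/-- **(WN) implies (Ta)** (with any `θ₀ ∈ (0,1)`, indeed for all `θ ∈ [0,1]`).
Let `f : ℝᴺ × ℝ → ℝ` be continuous with primitive `F(x,t) = ∫₀ᵗ f(x,s) ds` and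
suppose `t ↦ f(x,t)/|t|` is non-decreasing on `(−∞,0)` and on `(0,∞)`. Then
for every `θ ∈ [0,1]` and all `(x,t)`:
`((1 − θ²)/2)·t·f(x,t) ≥ F(x,t) − F(x,θt)`. -/
theorem WN_implies_Ta (N : ℕ)
    (f F : (Fin N → ℝ) → ℝ → ℝ)
    (hf : Continuous fun p : (Fin N → ℝ) × ℝ => f p.1 p.2)
    (hF : ∀ x t, F x t = ∫ s in (0:ℝ)..t, f x s)
    -- (WN)
    (hWNpos : ∀ x, ∀ s t : ℝ, 0 < s → s ≤ t → f x s / |s| ≤ f x t / |t|)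
    (hWNneg : ∀ x, ∀ s t : ℝ, s ≤ t → t < 0 → f x s / |s| ≤ f x t / |t|) :
    ∀ θ : ℝ, θ ∈ Set.Icc (0:ℝ) 1 → ∀ x t,
      ((1 - θ ^ 2) / 2) * (t * f x t) ≥ F x t - F x (θ * t) := by
  intro θ hθ x t
  obtain ⟨hθ0, hθ1⟩ := hθ
  have hfx : Continuous (f x) := hf.comp (Continuous.prodMk_right x)
  -- f x 0 ≤ 0
  have hf0le : f x 0 ≤ 0 := by
    have hev : ∀ᶠ s in 𝓝[>] (0:ℝ), f x s ≤ s * f x 1 := by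
      filter_upwards [Ioc_mem_nhdsGT_of_mem (Set.left_mem_Ico.mpr one_pos)] with s hs
      have h := hWNpos x s 1 hs.1 hs.2
      rw [abs_of_pos hs.1, abs_one, div_one] at h
      have := (div_le_iff₀ hs.1).mp h
      linarith
    have h1 : Tendsto (fun s => f x s) (𝓝[>] (0:ℝ)) (𝓝 (f x 0)) :=
      (hfx.tendsto 0).mono_left nhdsWithin_le_nhds
    have h2 : Tendsto (fun s : ℝ => s * f x 1) (𝓝[>] (0:ℝ)) (𝓝 0) := by
      have hc : Continuous fun s : ℝ => s * f x 1 := continuous_id.mul continuous_const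
      have := (hc.tendsto 0).mono_left (nhdsWithin_le_nhds (s := Set.Ioi (0:ℝ)))
      simpa using this
    exact le_of_tendsto_of_tendsto h1 h2 hev
  -- f x 0 ≥ 0
  have hf0ge : 0 ≤ f x 0 := by
    have hev : ∀ᶠ s in 𝓝[<] (0:ℝ), (-s) * f x (-1) ≤ f x s := by
      filter_upwards [Ico_mem_nhdsLT_of_mem (Set.right_mem_Ioc.mpr (by norm_num : (-1:ℝ) < 0))]
        with s hs
      have h := hWNneg x (-1) s hs.1 hs.2
      rw [abs_of_neg hs.2] at h
      simp only [abs_neg, abs_one, div_one] at h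
      have hspos : 0 < -s := by linarith [hs.2]
      have := (le_div_iff₀ hspos).mp h
      linarith
    have h1 : Tendsto (fun s => f x s) (𝓝[<] (0:ℝ)) (𝓝 (f x 0)) :=
      (hfx.tendsto 0).mono_left nhdsWithin_le_nhds
    have h2 : Tendsto (fun s : ℝ => (-s) * f x (-1)) (𝓝[<] (0:ℝ)) (𝓝 0) := by
      have hc : Continuous fun s : ℝ => (-s) * f x (-1) :=
        (continuous_neg).mul continuous_const
      have := (hc.tendsto 0).mono_left (nhdsWithin_le_nhds (s := Set.Iio (0:ℝ)))
      simpa using this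
    exact le_of_tendsto_of_tendsto h2 h1 hev
  have hFdiff : F x t - F x (θ * t) = ∫ s in (θ*t)..t, f x s := by
    rw [hF, hF, intervalIntegral.integral_interval_sub_left
      (hfx.intervalIntegrable _ _) (hfx.intervalIntegrable _ _)]
  rcases lt_trichotomy t 0 with ht | ht | ht
  · -- t < 0
    have htne : t ≠ 0 := ht.ne
    have ht' : (0:ℝ) < -t := by linarith
    have hle : t ≤ θ * t := by nlinarith
    have hθt0 : θ * t ≤ 0 := mul_nonpos_of_nonneg_of_nonpos hθ0 ht.le
    have key : ∀ s ∈ Set.Icc t (θ * t), s * (f x t / t) ≤ f x s := by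
      intro s hs
      rcases lt_or_eq_of_le (hs.2.trans hθt0) with hs0 | hs0
      · have h := hWNneg x t s hs.1 hs0
        rw [abs_of_neg ht, abs_of_neg hs0] at h
        have hspos : 0 < -s := by linarith
        have hmul := (div_le_div_iff₀ ht' hspos).mp h
        have heq : s * (f x t / t) = (f x t * -s) / (-t) := by
          field_simp
        rw [heq, div_le_iff₀ ht']
        exact hmul
      · rw [hs0]; simpa using hf0ge
    have hint : ∫ s in t..(θ*t), s * (f x t / t) ≤ ∫ s in t..(θ*t), f x s := by
      apply intervalIntegral.integral_mono_on hle
      · exact ((continuous_id.mul continuous_const).intervalIntegrable _ _)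
      · exact hfx.intervalIntegrable _ _
      · exact key
    have hval : ∫ s in t..(θ*t), s * (f x t / t)
        = (((θ*t)^2 - t^2)/2) * (f x t / t) := by
      rw [intervalIntegral.integral_mul_const, integral_id]
    rw [intervalIntegral.integral_symm t (θ*t)] at hFdiff
    have halg : (((θ*t)^2 - t^2)/2) * (f x t / t)
        = -(((1 - θ ^ 2) / 2) * (t * f x t)) := by
      field_simp
      ring
    rw [hFdiff]
    rw [hval, halg] at hint
    linarith
  · simp [ht, hF]
  · -- t > 0
    have htne : t ≠ 0 := ht.ne'
    have hle : θ * t ≤ t := by nlinarith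
    have hθt0 : 0 ≤ θ * t := mul_nonneg hθ0 ht.le
    have key : ∀ s ∈ Set.Icc (θ * t) t, f x s ≤ s * (f x t / t) := by
      intro s hs
      rcases lt_or_eq_of_le (hθt0.trans hs.1) with hs0 | hs0
      · have h := hWNpos x s t hs0 hs.2
        rw [abs_of_pos ht, abs_of_pos hs0] at h
        have hmul := (div_le_div_iff₀ hs0 ht).mp h
        have heq : s * (f x t / t) = (f x t * s) / t := by
          field_simp
        rw [heq, le_div_iff₀ ht]
        linarith
      · rw [← hs0]; simpa using hf0le
    have hint : ∫ s in (θ*t)..t, f x s ≤ ∫ s in (θ*t)..t, s * (f x t / t) := by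
      apply intervalIntegral.integral_mono_on hle
      · exact hfx.intervalIntegrable _ _
      · exact ((continuous_id.mul continuous_const).intervalIntegrable _ _)
      · exact key
    have hval : ∫ s in (θ*t)..t, s * (f x t / t)
        = ((t^2 - (θ*t)^2)/2) * (f x t / t) := by
      rw [intervalIntegral.integral_mul_const, integral_id]
    have halg : ((t^2 - (θ*t)^2)/2) * (f x t / t)
        = ((1 - θ ^ 2) / 2) * (t * f x t) := by
      field_simp
    rw [hFdiff]
    rw [hval, halg] at hint
    linarith
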